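/- Fix γ ∈ (0,1] and a natural number n with n ≥ π/√γ, and set R = 1/cos(π/n). For x ∈ ℝ², let V_x = {x + R·(cos((2k+1)π/n), sin((2k+1)π/n)) : k = 0, 1, …, n−1} be the vertex set of the regular n-gon circumscribing the unit circle centered at x. Then for every halfspace classifier h (h(z) = 1 iff ⟨a,z⟩ + b ≥ 0, a ≠ 0) and every x ∈ ℝ²: (i) if there exists z with ‖z − x‖₂ ≤ 1 and h(z) ≠ h(x), then there exists v ∈ V_x with h(v) ≠ h(x); and (ii) if there exists v ∈ V_x with h(v) ≠ h(x), then there exists z with ‖z − x‖₂ ≤ 1 + γ and h(z) ≠ h(x). (Thus the n = O(π/√γ) polygon vertices tolerantly witness membership in the margin, between radii 1 and 1+γ.) -/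

import Mathlib

open MeasureTheory Set
open scoped ENNReal symmDiff

namespace AdvRobust

variable {X : Type*}

/-- Error region of a hypothesis `h : X → Bool`, as a subset of `X × Bool`. -/
def errSet (h : X → Bool) : Set (X × Bool) := {p | h p.1 ≠ p.2}

/-- Margin area of a hypothesis w.r.t. perturbation type `U`, as a subset of `X × Bool`. -/
def marSet (U : X → Set X) (h : X → Bool) : Set (X × Bool) :=
  {p | ∃ z ∈ U p.1, h z ≠ h p.1}

/-- Margin area of a hypothesis, identified with a subset of the domain `X`. -/
def marSetX (U : X → Set X) (h : X → Bool) : Set X :=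
  {x | ∃ z ∈ U x, h z ≠ h x}

/-- Robust loss `L^U_P(h) = P(err(h) ∪ mar_U(h))`. -/
noncomputable def robustLoss [MeasurableSpace X] (U : X → Set X)
    (P : Measure (X × Bool)) (h : X → Bool) : ℝ≥0∞ :=
  P (errSet h ∪ marSet U h)

/-- Binary (0/1) loss `L^{0/1}_P(h) = P(err(h))`. -/
noncomputable def binLoss [MeasurableSpace X]
    (P : Measure (X × Bool)) (h : X → Bool) : ℝ≥0∞ :=
  P (errSet h)

/-- Robust loss via the pointwise robust loss set `{(x,y) | ∃ z ∈ U x, h z ≠ y}`. -/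
noncomputable def robustLoss' [MeasurableSpace X] (U : X → Set X)
    (P : Measure (X × Bool)) (h : X → Bool) : ℝ≥0∞ :=
  P {p : X × Bool | ∃ z ∈ U p.1, h z ≠ p.2}

/-- A family of sets `G` shatters a finite set `B`. -/
def Shatters {Z : Type*} (G : Set (Set Z)) (B : Finset Z) : Prop :=
  ∀ F ⊆ B, ∃ g ∈ G, ∀ z ∈ B, (z ∈ g ↔ z ∈ F)

/-- The VC-dimension of `G` is at most `d`. -/
def VCdimLE {Z : Type*} (G : Set (Set Z)) (d : ℕ) : Prop :=
  ∀ B : Finset Z, Shatters G B → B.card ≤ d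

/-- The VC-dimension of `G` equals `d`. -/
def VCdimEq {Z : Type*} (G : Set (Set Z)) (d : ℕ) : Prop :=
  VCdimLE G d ∧ ∃ B : Finset Z, Shatters G B ∧ B.card = d

/-- The family `{h⁻¹(1) : h ∈ H}` associated with a class of Boolean hypotheses. -/
def classSets (H : Set (X → Bool)) : Set (Set X) := (fun h => h ⁻¹' {true}) '' H

/-- The margin class `{mar_U(h) : h ∈ H}`. -/
def marginClass (U : X → Set X) (H : Set (X → Bool)) : Set (Set (X × Bool)) :=
  (marSet U) '' H

/-- The halfspace classifier in `ℝ²`: `hs a b z = 1` iff `⟨a,z⟩ + b ≥ 0`. -/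
noncomputable def hs (a : ℝ × ℝ) (b : ℝ) (z : ℝ × ℝ) : Bool :=
  if 0 ≤ a.1 * z.1 + a.2 * z.2 + b then true else false

/-- The Euclidean (`ℓ²`) norm on `ℝ × ℝ`. -/
noncomputable def nrm2 (z : ℝ × ℝ) : ℝ := Real.sqrt (z.1 ^ 2 + z.2 ^ 2)

/-- The `k`-th vertex of the regular `n`-gon of circumradius `R` (circumscribing the unit
circle) centered at `x`: `x + R·(cos((2k+1)π/n), sin((2k+1)π/n))`. -/
noncomputable def vtx (x : ℝ × ℝ) (R : ℝ) (n k : ℕ) : ℝ × ℝ :=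
  (x.1 + R * Real.cos ((2 * (k : ℝ) + 1) * Real.pi / (n : ℝ)),
   x.2 + R * Real.sin ((2 * (k : ℝ) + 1) * Real.pi / (n : ℝ)))

private lemma nrm2_nonneg (z : ℝ × ℝ) : 0 ≤ nrm2 z := Real.sqrt_nonneg _

private lemma nrm2_pos_of_ne_zero {z : ℝ × ℝ} (hz : z ≠ 0) : 0 < nrm2 z := by
  have h : z.1 ≠ 0 ∨ z.2 ≠ 0 := by
    by_contra h
    push_neg at h
    exact hz (Prod.ext h.1 h.2)
  have : 0 < z.1 ^ 2 + z.2 ^ 2 := by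
    rcases h with h | h
    · have := sq_nonneg z.2; have := pow_pos (abs_pos.2 h) 2
      nlinarith [sq_abs z.1]
    · have := sq_nonneg z.1; have := pow_pos (abs_pos.2 h) 2
      nlinarith [sq_abs z.2]
  exact Real.sqrt_pos.2 this

private lemma cauchy2 (a u : ℝ × ℝ) : |a.1 * u.1 + a.2 * u.2| ≤ nrm2 a * nrm2 u := by
  have h1 : (a.1 * u.1 + a.2 * u.2) ^ 2 ≤ (a.1 ^ 2 + a.2 ^ 2) * (u.1 ^ 2 + u.2 ^ 2) := by
    nlinarith [sq_nonneg (a.1 * u.2 - a.2 * u.1)]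
  have h2 : |a.1 * u.1 + a.2 * u.2| = Real.sqrt ((a.1 * u.1 + a.2 * u.2) ^ 2) :=
    (Real.sqrt_sq_eq_abs _).symm
  rw [h2, nrm2, nrm2, ← Real.sqrt_mul (by positivity)]
  exact Real.sqrt_le_sqrt h1

private lemma dircover (a : ℝ × ℝ) (ha : a ≠ 0) (n : ℕ) (hn : 1 ≤ n) :
    ∃ k < n, nrm2 a * Real.cos (Real.pi / n) ≤
      a.1 * Real.cos ((2 * (k : ℝ) + 1) * Real.pi / n) +
        a.2 * Real.sin ((2 * (k : ℝ) + 1) * Real.pi / n) := by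
  have hπ := Real.pi_pos
  have hnpos : (0:ℝ) < n := by exact_mod_cast hn
  have hr : 0 < nrm2 a := nrm2_pos_of_ne_zero ha
  set c : ℂ := ⟨a.1, a.2⟩ with hc
  have hc0 : c ≠ 0 := by
    intro h
    apply ha
    have h1 : c.re = 0 := by rw [h]; simp
    have h2 : c.im = 0 := by rw [h]; simp
    exact Prod.ext h1 h2
  have habs : ‖c‖ = nrm2 a := by
    rw [Complex.norm_def, Complex.normSq_mk, nrm2]
    ring_nf
  set φ := Complex.arg c with hφ
  have hcosφ : Real.cos φ = a.1 / nrm2 a := by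
    rw [← habs]; exact Complex.cos_arg hc0
  have hsinφ : Real.sin φ = a.2 / nrm2 a := by
    rw [← habs]; exact Complex.sin_arg c
  have ha1 : a.1 = nrm2 a * Real.cos φ := by
    rw [hcosφ]; field_simp
  have ha2 : a.2 = nrm2 a * Real.sin φ := by
    rw [hsinφ]; field_simp
  set t : ℝ := if φ < 0 then φ + 2 * Real.pi else φ with ht
  have ht0 : 0 ≤ t := by
    rw [ht]
    split_ifs with h
    · have := Complex.neg_pi_lt_arg c; rw [← hφ] at this; linarith
    · linarith [not_lt.1 h]
  have ht2 : t < 2 * Real.pi := by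
    rw [ht]
    have := Complex.arg_le_pi c; rw [← hφ] at this
    split_ifs with h <;> linarith
  have hcost : ∀ θ : ℝ, Real.cos (θ - φ) = Real.cos (θ - t) := by
    intro θ
    rw [ht]
    split_ifs with h
    · rw [show θ - (φ + 2 * Real.pi) = θ - φ - 2 * Real.pi by ring, Real.cos_sub_two_pi]
    · rfl
  set k : ℕ := ⌊t * n / (2 * Real.pi)⌋₊ with hk
  have hkn : k < n := by
    rw [hk]
    rw [Nat.floor_lt (by positivity)]
    rw [div_lt_iff₀ (by positivity)]
    nlinarith
  have hlow : (k : ℝ) ≤ t * n / (2 * Real.pi) := Nat.floor_le (by positivity)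
  have hhigh : t * n / (2 * Real.pi) < (k : ℝ) + 1 := by
    have := Nat.lt_floor_add_one (t * n / (2 * Real.pi))
    rw [← hk] at this
    exact_mod_cast this
  have hlow2 : (k : ℝ) * (2 * Real.pi) ≤ t * n := (le_div_iff₀ (by positivity)).1 hlow
  have hhigh2 : t * n < ((k : ℝ) + 1) * (2 * Real.pi) := (div_lt_iff₀ (by positivity)).1 hhigh
  have hlow' : 2 * (k : ℝ) * Real.pi / n ≤ t := by
    rw [div_le_iff₀ hnpos]
    nlinarith
  have hhigh' : t < 2 * ((k : ℝ) + 1) * Real.pi / n := by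
    rw [lt_div_iff₀ hnpos]
    nlinarith
  set d : ℝ := (2 * (k : ℝ) + 1) * Real.pi / n - t with hd
  have habsd : |d| ≤ Real.pi / n := by
    rw [abs_le]
    constructor
    · rw [hd]
      have : (2 * (k : ℝ) + 1) * Real.pi / n = 2 * ((k : ℝ) + 1) * Real.pi / n - Real.pi / n := by
        field_simp; ring
      rw [this]
      linarith
    · rw [hd]
      have : (2 * (k : ℝ) + 1) * Real.pi / n = 2 * (k : ℝ) * Real.pi / n + Real.pi / n := by
        field_simp
      rw [this]
      linarith
  have hcosd : Real.cos (Real.pi / n) ≤ Real.cos d := by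
    rw [← Real.cos_abs d]
    apply Real.cos_le_cos_of_nonneg_of_le_pi (abs_nonneg d) _ habsd
    rw [div_le_iff₀ hnpos]
    have hn' : (1:ℝ) ≤ n := by exact_mod_cast hn
    nlinarith
  refine ⟨k, hkn, ?_⟩
  have key : a.1 * Real.cos ((2 * (k : ℝ) + 1) * Real.pi / n) +
      a.2 * Real.sin ((2 * (k : ℝ) + 1) * Real.pi / n) = nrm2 a * Real.cos d := by
    rw [ha1, ha2, hd, ← hcost, Real.cos_sub]
    ring
  rw [key]
  exact mul_le_mul_of_nonneg_left hcosd hr.le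

set_option maxHeartbeats 1000000 in
/-- For `γ ∈ (0,1]`, `n ≥ π/√γ` and `R = 1/cos(π/n)`, the `n` vertices of
the circumscribing regular `n`-gon centered at `x` tolerantly witness the margin for any
halfspace: an adversarial point within radius 1 yields a disagreeing vertex, and a
disagreeing vertex yields an adversarial point within radius `1 + γ`. -/
theorem statement9 (γ : ℝ) (hγ : γ ∈ Set.Ioc (0:ℝ) 1) (n : ℕ)
    (hn : Real.pi / Real.sqrt γ ≤ (n : ℝ))
    (R : ℝ) (hR : R = 1 / Real.cos (Real.pi / (n : ℝ)))
    (a : ℝ × ℝ) (ha : a ≠ 0) (b : ℝ) (x : ℝ × ℝ) :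
    ((∃ z : ℝ × ℝ, nrm2 (z - x) ≤ 1 ∧ hs a b z ≠ hs a b x) →
        ∃ k < n, hs a b (vtx x R n k) ≠ hs a b x) ∧
    ((∃ k < n, hs a b (vtx x R n k) ≠ hs a b x) →
        ∃ z : ℝ × ℝ, nrm2 (z - x) ≤ 1 + γ ∧ hs a b z ≠ hs a b x) := by
  obtain ⟨hγ0, hγ1⟩ := hγ
  have hπ := Real.pi_pos
  have hsγ : 0 < Real.sqrt γ := Real.sqrt_pos.2 hγ0
  have hsγ1 : Real.sqrt γ ≤ 1 := by
    rw [show (1:ℝ) = Real.sqrt 1 by simp]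
    exact Real.sqrt_le_sqrt hγ1
  have hnpos : (0:ℝ) < n := lt_of_lt_of_le (by positivity) hn
  have hn1 : 1 ≤ n := by exact_mod_cast Nat.one_le_iff_ne_zero.2 (by
    intro h; rw [h] at hnpos; simp at hnpos)
  have hπn : Real.pi / n ≤ Real.sqrt γ := by
    rw [div_le_iff₀ hnpos]
    rw [div_le_iff₀ hsγ] at hn
    linarith [hn]
  have hπn0 : 0 < Real.pi / n := by positivity
  have hπn2 : (Real.pi / n) ^ 2 ≤ γ := by
    calc (Real.pi / n) ^ 2 ≤ Real.sqrt γ ^ 2 :=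
          pow_le_pow_left₀ hπn0.le hπn 2
      _ = γ := Real.sq_sqrt hγ0.le
  have hcosπn : 1 - γ / 2 ≤ Real.cos (Real.pi / n) := by
    have h := Real.one_sub_sq_div_two_le_cos (x := Real.pi / n)
    linarith
  have hcospos : 0 < Real.cos (Real.pi / n) := by linarith
  have hRpos : 0 < R := by rw [hR]; positivity
  have hRcos : R * Real.cos (Real.pi / n) = 1 := by
    rw [hR]; field_simp
  have hRle : R ≤ 1 + γ := by
    rw [hR, div_le_iff₀ hcospos]
    nlinarith
  have hvnorm : ∀ k : ℕ, nrm2 (vtx x R n k - x) = R := by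
    intro k
    have h1 : (vtx x R n k - x).1 = R * Real.cos ((2 * (k : ℝ) + 1) * Real.pi / n) := by
      simp [vtx]
    have h2 : (vtx x R n k - x).2 = R * Real.sin ((2 * (k : ℝ) + 1) * Real.pi / n) := by
      simp [vtx]
    rw [nrm2, h1, h2]
    have : (R * Real.cos ((2 * (k : ℝ) + 1) * Real.pi / n)) ^ 2 +
        (R * Real.sin ((2 * (k : ℝ) + 1) * Real.pi / n)) ^ 2 = R ^ 2 := by
      have := Real.sin_sq_add_cos_sq ((2 * (k : ℝ) + 1) * Real.pi / n)
      nlinarith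
    rw [this, Real.sqrt_sq hRpos.le]
  have hra : 0 ≤ nrm2 a := nrm2_nonneg a
  constructor
  · rintro ⟨z, hz1, hz2⟩
    have hCS : |a.1 * (z - x).1 + a.2 * (z - x).2| ≤ nrm2 a * nrm2 (z - x) := cauchy2 a (z - x)
    have hCS' : |a.1 * (z.1 - x.1) + a.2 * (z.2 - x.2)| ≤ nrm2 a := by
      have : nrm2 a * nrm2 (z - x) ≤ nrm2 a * 1 :=
        mul_le_mul_of_nonneg_left hz1 hra
      simpa using hCS.trans (by linarith)
    by_cases hx : 0 ≤ a.1 * x.1 + a.2 * x.2 + b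
    · have hzlt : a.1 * z.1 + a.2 * z.2 + b < 0 := by
        by_contra h
        push_neg at h
        apply hz2
        simp [hs, hx, h]
      obtain ⟨k, hk, hkcos⟩ := dircover (-a) (neg_ne_zero.2 ha) n hn1
      refine ⟨k, hk, ?_⟩
      have hna : nrm2 (-a) = nrm2 a := by simp [nrm2]
      rw [hna] at hkcos
      have hkcos' : a.1 * Real.cos ((2 * (k : ℝ) + 1) * Real.pi / n) +
          a.2 * Real.sin ((2 * (k : ℝ) + 1) * Real.pi / n) ≤
          -(nrm2 a * Real.cos (Real.pi / n)) := by
        have h1 : (-a).1 = -a.1 := rfl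
        have h2 : (-a).2 = -a.2 := rfl
        rw [h1, h2] at hkcos
        linarith
      have hfv : a.1 * (vtx x R n k).1 + a.2 * (vtx x R n k).2 + b ≤
          a.1 * x.1 + a.2 * x.2 + b - nrm2 a := by
        have hv1 : (vtx x R n k).1 = x.1 + R * Real.cos ((2 * (k : ℝ) + 1) * Real.pi / n) := rfl
        have hv2 : (vtx x R n k).2 = x.2 + R * Real.sin ((2 * (k : ℝ) + 1) * Real.pi / n) := rfl
        rw [hv1, hv2]
        have h := mul_le_mul_of_nonneg_left hkcos' hRpos.le
        have h2 : R * (nrm2 a * Real.cos (Real.pi / n)) = nrm2 a := by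
          rw [show R * (nrm2 a * Real.cos (Real.pi / n))
              = nrm2 a * (R * Real.cos (Real.pi / n)) by ring, hRcos, mul_one]
        nlinarith [h, h2]
      have hfz : a.1 * x.1 + a.2 * x.2 + b - nrm2 a ≤ a.1 * z.1 + a.2 * z.2 + b := by
        have h1 := (abs_le.1 hCS').1
        have hexp : a.1 * z.1 + a.2 * z.2 + b =
            (a.1 * x.1 + a.2 * x.2 + b) + (a.1 * (z.1 - x.1) + a.2 * (z.2 - x.2)) := by ring
        linarith
      have : a.1 * (vtx x R n k).1 + a.2 * (vtx x R n k).2 + b < 0 := by linarith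
      simp [hs, hx, not_le.2 this]
    · push_neg at hx
      have hzge : 0 ≤ a.1 * z.1 + a.2 * z.2 + b := by
        by_contra h
        push_neg at h
        apply hz2
        simp [hs, not_le.2 hx, not_le.2 h]
      obtain ⟨k, hk, hkcos⟩ := dircover a ha n hn1
      refine ⟨k, hk, ?_⟩
      have hfv : a.1 * x.1 + a.2 * x.2 + b + nrm2 a ≤
          a.1 * (vtx x R n k).1 + a.2 * (vtx x R n k).2 + b := by
        have hv1 : (vtx x R n k).1 = x.1 + R * Real.cos ((2 * (k : ℝ) + 1) * Real.pi / n) := rfl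
        have hv2 : (vtx x R n k).2 = x.2 + R * Real.sin ((2 * (k : ℝ) + 1) * Real.pi / n) := rfl
        rw [hv1, hv2]
        have h := mul_le_mul_of_nonneg_left hkcos hRpos.le
        have h2 : R * (nrm2 a * Real.cos (Real.pi / n)) = nrm2 a := by
          rw [show R * (nrm2 a * Real.cos (Real.pi / n))
              = nrm2 a * (R * Real.cos (Real.pi / n)) by ring, hRcos, mul_one]
        nlinarith [h, h2]
      have hfz : a.1 * z.1 + a.2 * z.2 + b ≤ a.1 * x.1 + a.2 * x.2 + b + nrm2 a := by
        have h1 := (abs_le.1 hCS').2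
        have hexp : a.1 * z.1 + a.2 * z.2 + b =
            (a.1 * x.1 + a.2 * x.2 + b) + (a.1 * (z.1 - x.1) + a.2 * (z.2 - x.2)) := by ring
        linarith
      have : 0 ≤ a.1 * (vtx x R n k).1 + a.2 * (vtx x R n k).2 + b := by linarith
      simp [hs, not_le.2 hx, this]
  · rintro ⟨k, hk, hkne⟩
    exact ⟨vtx x R n k, by rw [hvnorm k]; exact hRle, hkne⟩

end AdvRobust
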